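/- Kriging limit theorem for random walk smoothing: with Γ = λ^{−1}I, Σ = Π^{1/2} Δ̃⁺ Π^{1/2}, X = Π^{1/2}1_n, and M_δ = (XX'/δ + Σ)(XX'/δ + Σ + Γ)^{−1}, the limit as δ → 0⁺ of M_δ(Y* − μX) + μX equals (I + λ^{−1} Π^{−1/2} Δ̃ Π^{−1/2})^{−1} Y*, the random walk predictor. -/

import Mathlib

open Matrix Filter Topology

namespace Stmt14Aux
variable {m : Type*} [Fintype m] [DecidableEq m]

lemma mul_vmv (M : Matrix m m ℝ) (a b : m → ℝ) :
    M * Matrix.vecMulVec a b = Matrix.vecMulVec (M.mulVec a) b := by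
  ext i j
  simp [Matrix.mul_apply, Matrix.vecMulVec_apply, Matrix.mulVec, dotProduct,
    Finset.sum_mul, mul_assoc]

lemma vmv_mul (a b : m → ℝ) (M : Matrix m m ℝ) :
    Matrix.vecMulVec a b * M = Matrix.vecMulVec a (Matrix.vecMul b M) := by
  ext i j
  simp [Matrix.mul_apply, Matrix.vecMulVec_apply, Matrix.vecMul, dotProduct,
    Finset.mul_sum, mul_assoc]

lemma vmv_mulVec (a b v : m → ℝ) :
    (Matrix.vecMulVec a b).mulVec v = (b ⬝ᵥ v) • a := by
  ext i
  simp [Matrix.vecMulVec_apply, Matrix.mulVec, dotProduct, Finset.mul_sum,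
    mul_comm, mul_left_comm]

lemma smul_vmv (t : ℝ) (a b : m → ℝ) :
    Matrix.vecMulVec (t • a) b = t • Matrix.vecMulVec a b := by
  ext i j
  simp [Matrix.vecMulVec_apply, mul_assoc]

lemma zero_vmv (b : m → ℝ) : Matrix.vecMulVec (0 : m → ℝ) b = 0 := by
  ext i j; simp [Matrix.vecMulVec_apply]

end Stmt14Aux

open Stmt14Aux

/-- Kriging limit theorem for random walk smoothing: with `Γ = λ⁻¹I`,
`Σ = Π^{1/2} Δ̃⁺ Π^{1/2}`, `X = Π^{1/2} 1`, and
`M_δ = (XX'/δ + Σ)(XX'/δ + Σ + Γ)⁻¹`, the limit as `δ → 0⁺` of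
`M_δ (Y* − μX) + μX` equals `(I + λ⁻¹ Π^{-1/2} Δ̃ Π^{-1/2})⁻¹ Y*`. -/
theorem stmt14 {n : ℕ} (lam μ : ℝ) (hlam : 0 < lam)
    (pr : Fin (n + 1) → ℝ) (hpr : ∀ i, 0 < pr i)
    (d : Fin (n + 1) → ℝ)
    (hd : ∀ i, i ≠ Fin.last n → 0 < d i) (hdl : d (Fin.last n) = 0)
    (U : Matrix (Fin (n + 1)) (Fin (n + 1)) ℝ) (hU : Uᵀ * U = 1)
    (Lap : Matrix (Fin (n + 1)) (Fin (n + 1)) ℝ)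
    (hLap : Lap = Uᵀ * Matrix.diagonal d * U)
    (hlast : (∀ i, U (Fin.last n) i = 1 / Real.sqrt (n + 1)) ∨
             (∀ i, U (Fin.last n) i = -(1 / Real.sqrt (n + 1))))
    (Ystar : Fin (n + 1) → ℝ) :
    let X : Fin (n + 1) → ℝ := fun i => Real.sqrt (pr i)
    let Δplus : Matrix (Fin (n + 1)) (Fin (n + 1)) ℝ :=
      Uᵀ * Matrix.diagonal (fun i => if i = Fin.last n then 0 else (d i)⁻¹) * U
    let Sig : Matrix (Fin (n + 1)) (Fin (n + 1)) ℝ :=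
      Matrix.diagonal X * Δplus * Matrix.diagonal X
    let Pinv : Matrix (Fin (n + 1)) (Fin (n + 1)) ℝ :=
      Matrix.diagonal fun i => (Real.sqrt (pr i))⁻¹
    Tendsto (fun δ : ℝ =>
        ((δ⁻¹ • Matrix.vecMulVec X X + Sig) *
          (δ⁻¹ • Matrix.vecMulVec X X + Sig +
            lam⁻¹ • (1 : Matrix (Fin (n + 1)) (Fin (n + 1)) ℝ))⁻¹).mulVec (Ystar - μ • X)
          + μ • X)
      (nhdsWithin 0 (Set.Ioi 0))
      (nhds (((1 : Matrix (Fin (n + 1)) (Fin (n + 1)) ℝ) +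
        lam⁻¹ • (Pinv * Lap * Pinv))⁻¹.mulVec Ystar)) := by
  intro X Δplus Sig Pinv
  set N : ℝ := (n : ℝ) + 1 with hNdef
  have hNpos : (0:ℝ) < N := by positivity
  set e : Fin (n + 1) → ℝ := fun _ => 1 with hedef
  set D : Matrix (Fin (n+1)) (Fin (n+1)) ℝ := Matrix.diagonal X with hDdef
  set A : Matrix (Fin (n+1)) (Fin (n+1)) ℝ := Matrix.vecMulVec X X with hAdef
  set Pm : Matrix (Fin (n+1)) (Fin (n+1)) ℝ := N⁻¹ • Matrix.vecMulVec e e with hPmdef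
  set W : Matrix (Fin (n+1)) (Fin (n+1)) ℝ := Pinv * Lap * Pinv with hWdef
  set C : Matrix (Fin (n+1)) (Fin (n+1)) ℝ := Sig + lam⁻¹ • 1 with hCdef
  have hXpos : ∀ i, 0 < X i := fun i => Real.sqrt_pos.mpr (hpr i)
  have hPinvD : Pinv * D = 1 := by
    show (Matrix.diagonal fun i => (Real.sqrt (pr i))⁻¹) * Matrix.diagonal X = 1
    rw [Matrix.diagonal_mul_diagonal]
    have h : (fun i => (Real.sqrt (pr i))⁻¹ * X i) = fun _ => (1:ℝ) :=
      funext fun i => inv_mul_cancel₀ (hXpos i).ne'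
    rw [h]; exact Matrix.diagonal_one
  have hDPinv : D * Pinv = 1 := by
    show Matrix.diagonal X * (Matrix.diagonal fun i => (Real.sqrt (pr i))⁻¹) = 1
    rw [Matrix.diagonal_mul_diagonal]
    have h : (fun i => X i * (Real.sqrt (pr i))⁻¹) = fun _ => (1:ℝ) :=
      funext fun i => mul_inv_cancel₀ (hXpos i).ne'
    rw [h]; exact Matrix.diagonal_one
  have hPinvX : Pinv.mulVec X = e := by
    funext i
    show (Matrix.diagonal fun j => (Real.sqrt (pr j))⁻¹).mulVec X i = e i
    rw [Matrix.mulVec_diagonal, hedef]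
    exact inv_mul_cancel₀ (hXpos i).ne'
  have hDe : D.mulVec e = X := by
    funext i
    show (Matrix.diagonal X).mulVec e i = X i
    rw [Matrix.mulVec_diagonal, hedef, mul_one]
  have hUU' : U * Uᵀ = 1 := mul_eq_one_comm.mp hU
  -- the spectral projection onto the kernel
  have hsq : Real.sqrt N * Real.sqrt N = N := Real.mul_self_sqrt hNpos.le
  have hproj : Uᵀ * Matrix.diagonal (fun k => if k = Fin.last n then (1:ℝ) else 0) * U = Pm := by
    ext i j
    rw [Matrix.mul_assoc, Matrix.mul_apply]
    simp only [Matrix.transpose_apply, Matrix.diagonal_mul, ite_mul, one_mul, zero_mul,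
      mul_ite, mul_zero]
    rw [Finset.sum_ite_eq' Finset.univ (Fin.last n) (fun k => U k i * U k j)]
    simp only [Finset.mem_univ, if_true]
    have hval : U (Fin.last n) i * U (Fin.last n) j = N⁻¹ := by
      rcases hlast with h | h
      · rw [h i, h j, div_mul_div_comm, one_mul, hsq, one_div]
      · rw [h i, h j, neg_mul_neg, div_mul_div_comm, one_mul, hsq, one_div]
    rw [hval, hPmdef]
    simp [Matrix.vecMulVec_apply, hedef]
  have hkey : ∀ f g : Fin (n+1) → ℝ,
      (Uᵀ * Matrix.diagonal f * U) * (Uᵀ * Matrix.diagonal g * U)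
        = Uᵀ * Matrix.diagonal (fun i => f i * g i) * U := by
    intro f g
    calc (Uᵀ * Matrix.diagonal f * U) * (Uᵀ * Matrix.diagonal g * U)
        = Uᵀ * Matrix.diagonal f * ((U * Uᵀ) * (Matrix.diagonal g * U)) := by
          simp only [Matrix.mul_assoc]
      _ = Uᵀ * (Matrix.diagonal f * Matrix.diagonal g) * U := by
          rw [hUU', Matrix.one_mul]; simp only [Matrix.mul_assoc]
      _ = Uᵀ * Matrix.diagonal (fun i => f i * g i) * U := by
          rw [Matrix.diagonal_mul_diagonal]
  have hLapΔplus : Lap * Δplus = 1 - Pm := by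
    show Lap * (Uᵀ * Matrix.diagonal (fun i => if i = Fin.last n then 0 else (d i)⁻¹) * U)
        = 1 - Pm
    rw [hLap, hkey]
    have h1 : (fun i => d i * (if i = Fin.last n then 0 else (d i)⁻¹))
        = fun i => (1:ℝ) - (if i = Fin.last n then 1 else 0) := by
      funext i
      by_cases h : i = Fin.last n
      · simp [h, hdl]
      · simp [h, mul_inv_cancel₀ (hd i h).ne']
    rw [h1]
    have h2 : Matrix.diagonal (fun i => (1:ℝ) - (if i = Fin.last n then 1 else 0))
        = 1 - Matrix.diagonal (fun i => if i = Fin.last n then (1:ℝ) else 0) := by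
      ext i j
      rcases eq_or_ne i j with rfl | hij
      · simp [Matrix.diagonal_apply_eq, Matrix.sub_apply, Matrix.one_apply_eq]
      · simp [Matrix.diagonal_apply_ne _ hij, Matrix.sub_apply, Matrix.one_apply_ne hij]
    rw [h2, Matrix.mul_sub, Matrix.sub_mul, Matrix.mul_one, hU, hproj]
  have hLapPm : Lap * Pm = 0 := by
    rw [← hproj, hLap, hkey]
    have h1 : (fun i => d i * (if i = Fin.last n then (1:ℝ) else 0)) = fun _ => (0:ℝ) := by
      funext i
      by_cases h : i = Fin.last n
      · simp [h, hdl]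
      · simp [h]
    rw [h1]
    have h2 : Matrix.diagonal (fun _ : Fin (n+1) => (0:ℝ)) = 0 := Matrix.diagonal_zero
    rw [h2, Matrix.mul_zero, Matrix.zero_mul]
  have hee : e ⬝ᵥ e = N := by
    simp [dotProduct, hedef, hNdef]
  have hPme : Pm.mulVec e = e := by
    rw [hPmdef, Matrix.smul_mulVec, vmv_mulVec, hee, smul_smul,
      inv_mul_cancel₀ hNpos.ne', one_smul]
  have hLape : Lap.mulVec e = 0 := by
    conv_lhs => rw [← hPme]
    rw [Matrix.mulVec_mulVec, hLapPm, Matrix.zero_mulVec]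
  -- positive definiteness of C
  have hCpd : C.PosDef := by
    have hdiagPSD : (Matrix.diagonal fun i => if i = Fin.last n then (0:ℝ) else (d i)⁻¹).PosSemidef := by
      refine Matrix.posSemidef_diagonal_iff.mpr fun i => ?_
      by_cases h : i = Fin.last n
      · simp [h]
      · simp only [h, if_false]
        exact inv_nonneg.mpr (hd i h).le
    have hUH : Uᴴ = Uᵀ := by ext i j; simp [Matrix.conjTranspose_apply]
    have hΔpPSD : Δplus.PosSemidef := by
      have := hdiagPSD.conjTranspose_mul_mul_same U
      rwa [hUH] at this
    have hDH : Dᴴ = D := by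
      show (Matrix.diagonal X)ᴴ = Matrix.diagonal X
      ext i j
      rcases eq_or_ne i j with rfl | hij
      · simp [Matrix.conjTranspose_apply]
      · simp [Matrix.conjTranspose_apply, Matrix.diagonal_apply_ne _ hij,
          Matrix.diagonal_apply_ne _ hij.symm]
    have hSigPSD : Sig.PosSemidef := by
      have := hΔpPSD.mul_mul_conjTranspose_same D
      rwa [hDH] at this
    have hlamPD : (lam⁻¹ • (1 : Matrix (Fin (n+1)) (Fin (n+1)) ℝ)).PosDef := by
      rw [Matrix.smul_one_eq_diagonal]
      exact Matrix.posDef_diagonal_iff.mpr fun i => by positivity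
    exact Matrix.PosDef.posSemidef_add hSigPSD hlamPD
  have hCdet : IsUnit C.det := hCpd.det_pos.ne'.isUnit
  have hCCi : C * C⁻¹ = 1 := Matrix.mul_nonsing_inv C hCdet
  have hCiC : C⁻¹ * C = 1 := Matrix.nonsing_inv_mul C hCdet
  set s : ℝ := X ⬝ᵥ (C⁻¹.mulVec X) with hsdef
  have hXne : X ≠ 0 := by
    intro h
    exact (hXpos 0).ne' (congrFun h 0)
  have hs : 0 < s := by
    have := hCpd.inv.dotProduct_mulVec_pos hXne
    simpa [hsdef] using this
  set Q : Matrix (Fin (n+1)) (Fin (n+1)) ℝ := C⁻¹ * A * C⁻¹ with hQdef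
  set G : ℝ → Matrix (Fin (n+1)) (Fin (n+1)) ℝ := fun δ => C⁻¹ - (δ + s)⁻¹ • Q with hGdef
  have hACiX : A.mulVec (C⁻¹.mulVec X) = s • X := by
    rw [hAdef, vmv_mulVec, ← hsdef]
  have hACA : A * (C⁻¹ * A) = s • A := by
    rw [hAdef, mul_vmv, mul_vmv, vmv_mulVec, ← hsdef, smul_vmv]
  -- Sherman-Morrison
  have hCQ : C * Q = A * C⁻¹ := by
    rw [hQdef, ← Matrix.mul_assoc, ← Matrix.mul_assoc, hCCi, Matrix.one_mul]
  have hAQ : A * Q = s • (A * C⁻¹) := by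
    rw [hQdef, ← Matrix.mul_assoc, ← Matrix.mul_assoc, Matrix.mul_assoc A C⁻¹ A, hACA,
      smul_mul_assoc]
  have hSM : ∀ δ : ℝ, 0 < δ → (δ⁻¹ • A + C) * G δ = 1 := by
    intro δ hδ
    have hδs : δ + s ≠ 0 := (add_pos hδ hs).ne'
    have hco : δ⁻¹ - δ⁻¹ * ((δ + s)⁻¹ * s) - (δ + s)⁻¹ = 0 := by
      field_simp
      ring
    have expand : (δ⁻¹ • A + C) * (C⁻¹ - (δ + s)⁻¹ • Q)
        = (δ⁻¹ - δ⁻¹ * ((δ + s)⁻¹ * s) - (δ + s)⁻¹) • (A * C⁻¹) + 1 := by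
      rw [Matrix.add_mul, Matrix.mul_sub, Matrix.mul_sub, hCCi,
        smul_mul_assoc δ⁻¹ A C⁻¹, smul_mul_assoc δ⁻¹ A ((δ + s)⁻¹ • Q),
        mul_smul_comm ((δ + s)⁻¹) A Q, mul_smul_comm ((δ + s)⁻¹) C Q, hAQ, hCQ,
        smul_smul ((δ + s)⁻¹) s, smul_smul δ⁻¹ ((δ + s)⁻¹ * s), sub_smul, sub_smul]
      abel
    show (δ⁻¹ • A + C) * (C⁻¹ - (δ + s)⁻¹ • Q) = 1
    rw [expand, hco, zero_smul, zero_add]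
  -- rewrite the function on (0, ∞)
  set v : Fin (n+1) → ℝ := Ystar - μ • X with hvdef
  set F : ℝ → (Fin (n+1) → ℝ) := fun δ => v - lam⁻¹ • (G δ).mulVec v + μ • X with hFdef
  have heq : ∀ δ ∈ Set.Ioi (0:ℝ),
      ((δ⁻¹ • A + Sig) * (δ⁻¹ • A + Sig + lam⁻¹ • 1)⁻¹).mulVec v + μ • X = F δ := by
    intro δ hδ
    have hδ' : (0:ℝ) < δ := hδ
    have hBG := hSM δ hδ'
    have hBinv : (δ⁻¹ • A + Sig + lam⁻¹ • 1)⁻¹ = G δ := by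
      rw [add_assoc, ← hCdef]
      exact Matrix.inv_eq_right_inv hBG
    have hfact : δ⁻¹ • A + Sig = (δ⁻¹ • A + C) - lam⁻¹ • 1 := by
      rw [hCdef]; abel
    rw [hBinv, hfact, Matrix.sub_mul, hBG, smul_mul_assoc, Matrix.one_mul,
      Matrix.sub_mulVec, Matrix.one_mulVec, Matrix.smul_mulVec]
  -- the limit value
  -- algebraic identities for the limit
  have hWSig : W * Sig = 1 - Pinv * (Pm * D) := by
    have hSig : Sig = D * Δplus * D := rfl
    rw [hWdef, hSig]
    calc Pinv * Lap * Pinv * (D * Δplus * D)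
        = Pinv * (Lap * ((Pinv * D) * (Δplus * D))) := by simp only [Matrix.mul_assoc]
      _ = Pinv * ((Lap * Δplus) * D) := by
          rw [hPinvD, Matrix.one_mul, ← Matrix.mul_assoc Lap Δplus D]
      _ = 1 - Pinv * (Pm * D) := by
          rw [hLapΔplus, Matrix.sub_mul, Matrix.one_mul, Matrix.mul_sub, hPinvD,
            ← Matrix.mul_assoc Pinv Pm D, Matrix.mul_assoc Pinv Pm D]
  have hWC : W * C = 1 - Pinv * (Pm * D) + lam⁻¹ • W := by
    rw [hCdef, Matrix.mul_add, hWSig, mul_smul_comm, Matrix.mul_one]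
  have h4 : C⁻¹ - (Pinv * (Pm * D)) * C⁻¹ + lam⁻¹ • (W * C⁻¹) = W := by
    calc C⁻¹ - (Pinv * (Pm * D)) * C⁻¹ + lam⁻¹ • (W * C⁻¹)
        = (1 - Pinv * (Pm * D) + lam⁻¹ • W) * C⁻¹ := by
          rw [Matrix.add_mul, Matrix.sub_mul, Matrix.one_mul, smul_mul_assoc lam⁻¹ W C⁻¹]
      _ = W * C * C⁻¹ := by rw [hWC]
      _ = W := by rw [Matrix.mul_assoc, hCCi, Matrix.mul_one]
  have hKCi : (1 + lam⁻¹ • W) * C⁻¹ = W + (Pinv * (Pm * D)) * C⁻¹ := by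
    rw [Matrix.add_mul, Matrix.one_mul, smul_mul_assoc lam⁻¹ W C⁻¹]
    calc C⁻¹ + lam⁻¹ • (W * C⁻¹)
        = (C⁻¹ - (Pinv * (Pm * D)) * C⁻¹ + lam⁻¹ • (W * C⁻¹)) + (Pinv * (Pm * D)) * C⁻¹ := by
          abel
      _ = W + (Pinv * (Pm * D)) * C⁻¹ := by rw [h4]
  have hWX : W.mulVec X = 0 := by
    rw [hWdef, ← Matrix.mulVec_mulVec, ← Matrix.mulVec_mulVec, hPinvX, hLape,
      Matrix.mulVec_zero]
  have hWA : W * A = 0 := by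
    rw [hAdef, mul_vmv, hWX, zero_vmv]
  have hvMe : Matrix.vecMul e D = X := by
    funext j
    show (Matrix.vecMul e (Matrix.diagonal X)) j = X j
    rw [Matrix.vecMul_diagonal, hedef, one_mul]
  have hPmD : Pm * D = N⁻¹ • Matrix.vecMulVec e X := by
    rw [hPmdef, smul_mul_assoc, vmv_mul, hvMe]
  have hKey : Pm * (D * (C⁻¹ * A)) = s • (Pm * D) := by
    have hDvm : D * (C⁻¹ * A) = Matrix.vecMulVec (D.mulVec (C⁻¹.mulVec X)) X := by
      rw [hAdef, mul_vmv, mul_vmv]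
    rw [hDvm, hPmdef, smul_mul_assoc, mul_vmv, vmv_mulVec]
    have hdot : e ⬝ᵥ (D.mulVec (C⁻¹.mulVec X)) = s := by
      rw [Matrix.dotProduct_mulVec]
      rw [hvMe, ← hsdef]
    rw [hdot, smul_vmv, hPmD]
    rw [smul_comm]
  have hKQ : (1 + lam⁻¹ • W) * Q = s • ((Pinv * (Pm * D)) * C⁻¹) := by
    have h5 : (1 + lam⁻¹ • W) * Q = ((1 + lam⁻¹ • W) * C⁻¹) * A * C⁻¹ := by
      rw [hQdef]; simp only [Matrix.mul_assoc]
    rw [h5, hKCi, Matrix.add_mul, hWA, zero_add]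
    have h6 : Pinv * (Pm * D) * C⁻¹ * A * C⁻¹ = Pinv * (Pm * (D * (C⁻¹ * A))) * C⁻¹ := by
      simp only [Matrix.mul_assoc]
    rw [h6, hKey, mul_smul_comm, smul_mul_assoc]
  have hQX : Q.mulVec X = s • (C⁻¹.mulVec X) := by
    rw [hQdef, ← Matrix.mulVec_mulVec, ← Matrix.mulVec_mulVec, hACiX, Matrix.mulVec_smul]
  have hG0X : (G 0).mulVec X = 0 := by
    show (C⁻¹ - (0 + s)⁻¹ • Q).mulVec X = 0
    rw [zero_add, Matrix.sub_mulVec, Matrix.smul_mulVec, hQX, smul_smul,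
      inv_mul_cancel₀ hs.ne', one_smul, sub_self]
  have hKG0 : (1 + lam⁻¹ • W) * G 0 = W := by
    show (1 + lam⁻¹ • W) * (C⁻¹ - (0 + s)⁻¹ • Q) = W
    rw [zero_add, Matrix.mul_sub, mul_smul_comm, hKQ, smul_smul,
      inv_mul_cancel₀ hs.ne', one_smul, hKCi, add_sub_cancel_right]
  have hKinv : ((1 : Matrix (Fin (n+1)) (Fin (n+1)) ℝ) + lam⁻¹ • W)⁻¹ = 1 - lam⁻¹ • G 0 := by
    apply Matrix.inv_eq_right_inv
    rw [Matrix.mul_sub, Matrix.mul_one, mul_smul_comm, hKG0, add_sub_cancel_right]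
  have hF0 : F 0 = ((1 : Matrix (Fin (n+1)) (Fin (n+1)) ℝ) + lam⁻¹ • W)⁻¹.mulVec Ystar := by
    rw [hKinv, Matrix.sub_mulVec, Matrix.one_mulVec, Matrix.smul_mulVec]
    show v - lam⁻¹ • (G 0).mulVec v + μ • X = Ystar - lam⁻¹ • (G 0).mulVec Ystar
    rw [hvdef, Matrix.mulVec_sub, Matrix.mulVec_smul, hG0X, smul_zero, sub_zero]
    abel
  have hTF : Tendsto F (nhdsWithin 0 (Set.Ioi 0)) (nhds (F 0)) := by
    have h1 : Tendsto (fun δ : ℝ => (δ + s)⁻¹) (nhds 0) (nhds ((0 + s)⁻¹)) := by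
      apply Tendsto.inv₀
      · exact (continuous_id.add continuous_const).tendsto 0
      · rw [zero_add]; exact hs.ne'
    have hGv : ∀ δ : ℝ, (G δ).mulVec v = C⁻¹.mulVec v - (δ + s)⁻¹ • Q.mulVec v := by
      intro δ
      show (C⁻¹ - (δ + s)⁻¹ • Q).mulVec v = _
      rw [Matrix.sub_mulVec, Matrix.smul_mulVec]
    have h3 : Tendsto (fun δ : ℝ => (G δ).mulVec v) (nhds 0) (nhds ((G 0).mulVec v)) := by
      simp only [hGv]
      exact tendsto_const_nhds.sub (h1.smul tendsto_const_nhds)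
    have h4 : Tendsto F (nhds 0) (nhds (F 0)) := by
      rw [hFdef]
      exact (tendsto_const_nhds.sub (h3.const_smul lam⁻¹)).add tendsto_const_nhds
    exact h4.mono_left nhdsWithin_le_nhds
  rw [← hF0]
  refine Tendsto.congr' ?_ hTF
  filter_upwards [self_mem_nhdsWithin] with δ hδ
  exact (heq δ hδ).symm
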